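/- For every complex number z, ∫_0^1 exp(-(1-ξ²) z / 4) dξ = ∑_{k=0}^∞ (-z)^k · k! / (2k+1)!, where the series converges absolutely for all z. -/

import Mathlib

open MeasureTheory Real intervalIntegral

/-- The Wallis-type integral `∫₀¹ (1-x²)ⁿ dx` equals `∫₀^{π/2} cos^{2n+1}`. -/
lemma wallis_aux (n : ℕ) :
    (∫ x in (0:ℝ)..1, (1 - x ^ 2) ^ n) = ∫ x in (0:ℝ)..(π/2), Real.cos x ^ (2 * n + 1) := by
  have h := integral_sin_pow_mul_cos_pow_odd (a := 0) (b := π/2) 0 n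
  simpa using h.symm

lemma wallis_rec (n : ℕ) :
    (∫ x in (0:ℝ)..1, (1 - x ^ 2) ^ (n + 1)) =
      (2 * (n:ℝ) + 2) / (2 * (n:ℝ) + 3) * ∫ x in (0:ℝ)..1, (1 - x ^ 2) ^ n := by
  rw [wallis_aux, wallis_aux]
  have h2 : 2 * (n + 1) + 1 = (2 * n + 1) + 2 := by ring
  rw [h2, integral_cos_pow (a := 0) (b := π/2) (2 * n + 1), Real.cos_pi_div_two,
    Real.sin_zero, zero_pow (by omega : 2 * n + 1 + 1 ≠ 0)]
  push_cast
  ring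

lemma wallis_val (n : ℕ) :
    (∫ x in (0:ℝ)..1, (1 - x ^ 2) ^ n) =
      4 ^ n * (n.factorial : ℝ) ^ 2 / ((2 * n + 1).factorial : ℝ) := by
  induction n with
  | zero => simp
  | succ k ih =>
    rw [wallis_rec, ih]
    have h1 : (2 * (k + 1) + 1) = (2 * k + 1) + 2 := by ring
    rw [h1]
    have e1 : (((2 * k + 1) + 2).factorial : ℝ)
        = ((2 * k + 3 : ℕ) : ℝ) * ((2 * k + 2 : ℕ) : ℝ) * ((2 * k + 1).factorial : ℝ) := by
      rw [show (2 * k + 1) + 2 = (2 * k + 2) + 1 by ring, Nat.factorial_succ,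
        show (2 * k + 2) = (2 * k + 1) + 1 by ring, Nat.factorial_succ]
      push_cast; ring
    have e2 : ((k + 1).factorial : ℝ) = ((k : ℝ) + 1) * (k.factorial : ℝ) := by
      rw [Nat.factorial_succ]; push_cast; ring
    have hf1 : ((2 * k + 1).factorial : ℝ) ≠ 0 := by positivity
    rw [e1, e2]
    have h3 : ((2 * k + 3 : ℕ) : ℝ) = 2 * (k : ℝ) + 3 := by push_cast; ring
    have h4 : ((2 * k + 2 : ℕ) : ℝ) = 2 * (k : ℝ) + 2 := by push_cast; ring
    rw [h3, h4]
    have hne : (2 * (k : ℝ) + 3) ≠ 0 := by positivity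
    have hne2 : (2 * (k : ℝ) + 2) ≠ 0 := by positivity
    field_simp
    ring

/-- Integral representation of the entire form factor
`γ^{(1)}(z) = ∫_0^1 exp(-(1-ξ²)z/4) dξ = ∑_{k≥0} (-z)^k k!/(2k+1)!`,
with absolute convergence of the series for every `z`. -/
theorem stmt_3 (z : ℂ) :
    (∫ ξ in (0:ℝ)..1, Complex.exp (-(1 - (ξ:ℂ) ^ 2) * z / 4)) =
      ∑' k : ℕ, (-z) ^ k * (k.factorial : ℂ) / ((2 * k + 1).factorial : ℂ) ∧
    Summable (fun k : ℕ =>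
      ‖(-z) ^ k * (k.factorial : ℂ) / ((2 * k + 1).factorial : ℂ)‖) := by
  -- Summability of the series of norms
  have hsummable : Summable (fun k : ℕ =>
      ‖(-z) ^ k * (k.factorial : ℂ) / ((2 * k + 1).factorial : ℂ)‖) := by
    apply Summable.of_nonneg_of_le (fun k => norm_nonneg _)
      (fun k => ?_) (Real.summable_pow_div_factorial ‖z‖)
    have hfle : (k.factorial : ℝ) * (k.factorial : ℝ) ≤ ((2 * k + 1).factorial : ℝ) := by
      have := Nat.factorial_mul_factorial_dvd_factorial_add k k
      have h1 : (k.factorial * k.factorial : ℕ) ≤ (k + k).factorial := Nat.le_of_dvd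
        (Nat.factorial_pos _) this
      have h2 : (k + k).factorial ≤ (2 * k + 1).factorial :=
        Nat.factorial_le (by omega)
      exact_mod_cast h1.trans h2
    rw [norm_div, norm_mul, norm_pow, norm_neg]
    have hk : (0:ℝ) < (k.factorial : ℝ) := by positivity
    have h2k : (0:ℝ) < ((2 * k + 1).factorial : ℝ) := by positivity
    simp only [Complex.norm_natCast]
    rw [div_le_div_iff₀ h2k hk]
    calc ‖z‖ ^ k * (k.factorial : ℝ) * (k.factorial : ℝ)
        ≤ ‖z‖ ^ k * ((2 * k + 1).factorial : ℝ) := by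
          rw [mul_assoc]
          exact mul_le_mul_of_nonneg_left hfle (by positivity)
      _ = ‖z‖ ^ k * ((2 * k + 1).factorial : ℝ) := rfl
  refine ⟨?_, hsummable⟩
  -- The term-by-term series of functions
  set F : ℕ → ℝ → ℂ := fun n t => (((t:ℂ) ^ 2 - 1) * z / 4) ^ n / (n.factorial : ℂ) with hF
  have hsum : HasSum (fun n => ∫ t in (0:ℝ)..1, F n t)
      (∫ ξ in (0:ℝ)..1, Complex.exp (-(1 - (ξ:ℂ) ^ 2) * z / 4)) := by
    apply intervalIntegral.hasSum_integral_of_dominated_convergence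
      (bound := fun n _ => (‖z‖ / 4) ^ n / (n.factorial : ℝ))
    · intro n
      apply Continuous.aestronglyMeasurable
      fun_prop
    · intro n
      filter_upwards with t ht
      have ht' : t ∈ Set.Ioc (0:ℝ) 1 := by
        simpa [Set.uIoc_of_le (by norm_num : (0:ℝ) ≤ 1)] using ht
      have hones : ‖(t:ℂ) ^ 2 - 1‖ ≤ 1 := by
        rw [show ((t:ℂ) ^ 2 - 1) = ((t ^ 2 - 1 : ℝ) : ℂ) by push_cast; ring,
          Complex.norm_real, Real.norm_eq_abs, abs_le]
        constructor
        · nlinarith [ht'.1, ht'.2]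
        · nlinarith [ht'.1, ht'.2]
      have h4 : ‖(4:ℂ)‖ = 4 := by norm_num
      have hb : ‖((t:ℂ) ^ 2 - 1) * z / 4‖ ≤ ‖z‖ / 4 := by
        rw [norm_div, norm_mul, h4]
        have := mul_le_mul_of_nonneg_right hones (norm_nonneg z)
        rw [one_mul] at this
        exact div_le_div_of_nonneg_right this (by norm_num) |>.trans_eq rfl
      rw [hF]
      simp only
      rw [norm_div, norm_pow, Complex.norm_natCast,
        div_le_div_iff_of_pos_right (by positivity : (0:ℝ) < (n.factorial : ℝ))]
      exact pow_le_pow_left₀ (norm_nonneg _) hb n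
    · filter_upwards with t _
      exact Real.summable_pow_div_factorial _
    · exact _root_.intervalIntegrable_const
    · filter_upwards with t _
      have h := NormedSpace.expSeries_div_hasSum_exp (((t:ℂ) ^ 2 - 1) * z / 4)
      have he : Complex.exp (-(1 - (t:ℂ) ^ 2) * z / 4)
          = NormedSpace.exp (((t:ℂ) ^ 2 - 1) * z / 4) := by
        rw [Complex.exp_eq_exp_ℂ]
        congr 1
        ring
      rw [he]
      exact h
  -- Evaluate each term integral
  have hterm : ∀ n : ℕ, (∫ t in (0:ℝ)..1, F n t)
      = (-z) ^ n * (n.factorial : ℂ) / ((2 * n + 1).factorial : ℂ) := by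
    intro n
    have h1 : (∫ t in (0:ℝ)..1, F n t)
        = (z / 4) ^ n / (n.factorial : ℂ) * ∫ t in (0:ℝ)..1, ((t:ℂ) ^ 2 - 1) ^ n := by
      rw [← intervalIntegral.integral_const_mul]
      congr 1
      ext t
      rw [hF]
      simp only
      rw [mul_div_assoc, mul_pow]
      ring
    have h2 : (∫ t in (0:ℝ)..1, ((t:ℂ) ^ 2 - 1) ^ n)
        = ((∫ t in (0:ℝ)..1, (t ^ 2 - 1 : ℝ) ^ n : ℝ) : ℂ) := by
      rw [← intervalIntegral.integral_ofReal]
      congr 1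
      ext t
      push_cast
      ring
    have h3 : (∫ t in (0:ℝ)..1, (t ^ 2 - 1 : ℝ) ^ n)
        = (-1 : ℝ) ^ n * ∫ t in (0:ℝ)..1, (1 - t ^ 2 : ℝ) ^ n := by
      rw [← intervalIntegral.integral_const_mul]
      congr 1
      ext t
      rw [← neg_pow, neg_sub]
    have h4 := wallis_val n
    rw [h1, h2, h3, h4]
    have hfC : ((n.factorial : ℂ)) ≠ 0 := by exact_mod_cast Nat.factorial_ne_zero n
    have h2fC : (((2 * n + 1).factorial : ℂ)) ≠ 0 := by
      exact_mod_cast Nat.factorial_ne_zero (2 * n + 1)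
    push_cast
    rw [div_pow]
    field_simp
    ring
  rw [← hsum.tsum_eq]
  exact tsum_congr hterm
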